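/- Let ω : ℝⁿ → (0,∞) be a continuous weight function satisfying the sub-additive condition (SA) and the condition (SH): ω(tξ) ≤ C ω(ξ) for all ξ ∈ ℝⁿ and |t| ≤ 1. Then: (1) for every ε > 0 there exists 0 < ε′ < ε such that for every set X ⊂ ℝⁿ one has (X_{[ε′ω]})_{[ε′ω]} ⊂ X_{[εω]} and (ℝⁿ∖X_{[εω]})_{[ε′ω]} ⊂ ℝⁿ∖X_{[ε′ω]}; (2) there exist constants ĉ > 0 and 0 < ε̂ < 1 such that for every X ⊂ ℝⁿ and every 0 < ε ≤ ε̂, if ξ ∈ X_{[εω]} then ω(ξ) > ĉ/ε. -/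

import Mathlib

open MeasureTheory
open scoped ENNReal

/-- The temperance condition (T). -/
def IsTemperate {n : ℕ} (ω : EuclideanSpace ℝ (Fin n) → ℝ) : Prop :=
  ∃ C N : ℝ, 0 < C ∧ 0 < N ∧ ∀ ξ η, ω ξ ≤ C * (1 + ‖ξ - η‖) ^ N * ω η

/-- A weight function: positive, measurable and temperate. -/
def IsWeight {n : ℕ} (ω : EuclideanSpace ℝ (Fin n) → ℝ) : Prop :=
  (∀ ξ, 0 < ω ξ) ∧ Measurable ω ∧ IsTemperate ω

/-- The sub-additive condition (SA). -/
def IsSubAdditiveWeight {n : ℕ} (ω : EuclideanSpace ℝ (Fin n) → ℝ) : Prop :=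
  ∃ C : ℝ, 0 < C ∧ ∀ ξ η, ω ξ ≤ C * (ω (ξ - η) + ω η)

/-- Condition (SH): `ω(tξ) ≤ C ω(ξ)` for all `ξ` and `|t| ≤ 1`. -/
def SatisfiesSH {n : ℕ} (ω : EuclideanSpace ℝ (Fin n) → ℝ) : Prop :=
  ∃ C : ℝ, 0 < C ∧ ∀ (ξ : EuclideanSpace ℝ (Fin n)) (t : ℝ), |t| ≤ 1 → ω (t • ξ) ≤ C * ω ξ

/-- The `[ω]`-neighborhood of size `ε` of a set `X ⊆ ℝⁿ`:
`X_{[εω]} = ⋃_{ξ₀ ∈ X} {ξ : ω(ξ - ξ₀) < ε ω(ξ₀)}`. -/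
def brNbhd {n : ℕ} (ω : EuclideanSpace ℝ (Fin n) → ℝ) (ε : ℝ)
    (X : Set (EuclideanSpace ℝ (Fin n))) : Set (EuclideanSpace ℝ (Fin n)) :=
  ⋃ ξ₀ ∈ X, {ξ | ω (ξ - ξ₀) < ε * ω ξ₀}

/-- Basic properties of `[ω]`-neighborhoods for a continuous weight `ω` satisfying (SA)
and (SH): (1) for every `ε > 0` there is `0 < ε' < ε` with
`(X_{[ε'ω]})_{[ε'ω]} ⊆ X_{[εω]}` and `(ℝⁿ ∖ X_{[εω]})_{[ε'ω]} ⊆ ℝⁿ ∖ X_{[ε'ω]}` for all `X`;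
(2) there are `ĉ > 0` and `0 < ε̂ < 1` such that `ξ ∈ X_{[εω]}` implies `ω(ξ) > ĉ/ε`
whenever `0 < ε ≤ ε̂`. -/
theorem brNbhd_properties {n : ℕ} (ω : EuclideanSpace ℝ (Fin n) → ℝ)
    (hω_cont : Continuous ω) (hω : IsWeight ω)
    (hSA : IsSubAdditiveWeight ω) (hSH : SatisfiesSH ω) :
    (∀ ε : ℝ, 0 < ε → ∃ ε' : ℝ, 0 < ε' ∧ ε' < ε ∧
      ∀ X : Set (EuclideanSpace ℝ (Fin n)),
        brNbhd ω ε' (brNbhd ω ε' X) ⊆ brNbhd ω ε X ∧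
        brNbhd ω ε' ((brNbhd ω ε X)ᶜ) ⊆ (brNbhd ω ε' X)ᶜ) ∧
    (∃ chat εhat : ℝ, 0 < chat ∧ 0 < εhat ∧ εhat < 1 ∧
      ∀ (X : Set (EuclideanSpace ℝ (Fin n))) (ε : ℝ), 0 < ε → ε ≤ εhat →
        ∀ ξ ∈ brNbhd ω ε X, chat / ε < ω ξ) := by
  obtain ⟨hpos, -, -⟩ := hω
  obtain ⟨C0, hC0, hSA0⟩ := hSA
  obtain ⟨K0, hK0, hSH0⟩ := hSH
  obtain ⟨C, hCdef⟩ : ∃ C : ℝ, C = max C0 1 := ⟨_, rfl⟩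
  obtain ⟨K, hKdef⟩ : ∃ K : ℝ, K = max K0 1 := ⟨_, rfl⟩
  have hC0le : C0 ≤ C := hCdef ▸ le_max_left _ _
  have hK0le : K0 ≤ K := hKdef ▸ le_max_left _ _
  have hC1 : (1:ℝ) ≤ C := hCdef ▸ le_max_right _ _
  have hK1 : (1:ℝ) ≤ K := hKdef ▸ le_max_right _ _
  have hCpos : (0:ℝ) < C := lt_of_lt_of_le one_pos hC1
  have hKpos : (0:ℝ) < K := lt_of_lt_of_le one_pos hK1
  have hSAC : ∀ ξ η, ω ξ ≤ C * (ω (ξ - η) + ω η) := by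
    intro ξ η
    refine (hSA0 ξ η).trans ?_
    exact mul_le_mul_of_nonneg_right hC0le
      (add_pos (hpos _) (hpos _)).le
  have hneg : ∀ ζ, ω (-ζ) ≤ K * ω ζ := by
    intro ζ
    have h := hSH0 ζ (-1) (by norm_num)
    rw [neg_one_smul] at h
    exact h.trans (mul_le_mul_of_nonneg_right hK0le (hpos ζ).le)
  have h0 : ∀ ζ, ω 0 ≤ K * ω ζ := by
    intro ζ
    have h := hSH0 ζ 0 (by norm_num)
    rw [zero_smul] at h
    exact h.trans (mul_le_mul_of_nonneg_right hK0le (hpos ζ).le)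
  constructor
  · intro ε hε
    obtain ⟨D, hDdef⟩ : ∃ D : ℝ, D = C*(2*C+1) + 2*C*K + C*(4*C^2*K+1) + 1 := ⟨_, rfl⟩
    have hT1 : (0:ℝ) < C*(2*C+1) := by positivity
    have hT2 : (0:ℝ) < 2*C*K := by positivity
    have hT3 : (0:ℝ) < C*(4*C^2*K+1) := by positivity
    have hD1 : (1:ℝ) < D := by rw [hDdef]; linarith
    have hDpos : (0:ℝ) < D := by linarith
    have hle1 : C*(2*C+1) ≤ D := by rw [hDdef]; linarith
    have hle2 : 2*C*K ≤ D := by rw [hDdef]; linarith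
    have hle3 : C*(4*C^2*K+1) ≤ D := by rw [hDdef]; linarith
    obtain ⟨m, hmdef⟩ : ∃ m : ℝ, m = min ε 1 := ⟨_, rfl⟩
    have hmpos : 0 < m := hmdef ▸ lt_min hε one_pos
    have hm1 : m ≤ 1 := hmdef ▸ min_le_right _ _
    have hmε : m ≤ ε := hmdef ▸ min_le_left _ _
    obtain ⟨ε', hε'def⟩ : ∃ e : ℝ, e = m / D := ⟨_, rfl⟩
    have hDne : D ≠ 0 := hDpos.ne'
    have hε'pos : 0 < ε' := by rw [hε'def]; positivity
    have key : ∀ A : ℝ, 0 ≤ A → A ≤ D → A * ε' ≤ m := by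
      intro A hA0 hAD
      calc A * ε' ≤ D * ε' := mul_le_mul_of_nonneg_right hAD (by positivity)
        _ = m := by rw [hε'def]; field_simp
    have hε'1 : ε' ≤ 1 := by
      have := key 1 zero_le_one hD1.le
      linarith
    refine ⟨ε', hε'pos, ?_, ?_⟩
    · calc ε' < m := hε'def ▸ div_lt_self hmpos hD1
        _ ≤ ε := hmε
    intro X
    constructor
    · intro ξ hξ
      simp only [brNbhd, Set.mem_iUnion, Set.mem_setOf_eq, exists_prop] at hξ ⊢
      obtain ⟨ξ₁, ⟨ξ₀, hξ₀X, h2⟩, h1⟩ := hξ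
      refine ⟨ξ₀, hξ₀X, ?_⟩
      have hA := hSAC (ξ - ξ₀) (ξ₁ - ξ₀)
      rw [sub_sub_sub_cancel_right] at hA
      have hB := hSAC ξ₁ ξ₀
      have hk : C*(2*C+1) * ε' ≤ ε :=
        (key _ hT1.le hle1).trans hmε
      have hε'w : ε' * ω ξ₀ ≤ ω ξ₀ := by
        have := mul_le_mul_of_nonneg_right hε'1 (hpos ξ₀).le
        linarith
      have hω1 : ω ξ₁ < 2*C*ω ξ₀ := by
        have g1 : C * ω (ξ₁ - ξ₀) < C * (ε' * ω ξ₀) := mul_lt_mul_of_pos_left h2 hCpos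
        have g2 : C * (ε' * ω ξ₀) ≤ C * ω ξ₀ := mul_le_mul_of_nonneg_left hε'w hCpos.le
        nlinarith [hB, g1, g2]
      have e1 : C * ω (ξ - ξ₁) < C * (ε' * ω ξ₁) := by
        exact mul_lt_mul_of_pos_left h1 hCpos
      have e2 : C * ω (ξ₁ - ξ₀) < C * (ε' * ω ξ₀) := by
        exact mul_lt_mul_of_pos_left h2 hCpos
      have e3 : ε' * ω ξ₁ < ε' * (2*C*ω ξ₀) := mul_lt_mul_of_pos_left hω1 hε'pos
      have e4 : C * (ε' * ω ξ₁) < C * (ε' * (2*C*ω ξ₀)) :=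
        mul_lt_mul_of_pos_left e3 hCpos
      have e5 : C*(2*C+1)*ε' * ω ξ₀ ≤ ε * ω ξ₀ :=
        mul_le_mul_of_nonneg_right hk (hpos ξ₀).le
      linarith [hA, e1, e2, e4, e5]
    · intro ξ hξ
      rw [Set.mem_compl_iff]
      intro hmem
      simp only [brNbhd, Set.mem_iUnion, Set.mem_setOf_eq, exists_prop,
        Set.mem_compl_iff] at hξ hmem
      obtain ⟨η, hηnot, h3⟩ := hξ
      obtain ⟨ξ₀, hξ₀X, hcon⟩ := hmem
      apply hηnot
      refine ⟨ξ₀, hξ₀X, ?_⟩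
      have hnn : ω (η - ξ) ≤ K * ω (ξ - η) := by
        have := hneg (ξ - η)
        rwa [neg_sub] at this
      have hηup : ω η < 2 * C * ω ξ := by
        have hB := hSAC η ξ
        have hsmall : 2*C*K*ε' ≤ 1 := (key _ hT2.le hle2).trans hm1
        have p1 : C * ω (η - ξ) ≤ C * (K * ω (ξ - η)) :=
          mul_le_mul_of_nonneg_left hnn hCpos.le
        have p2 : C * (K * ω (ξ - η)) < C * (K * (ε' * ω η)) :=
          mul_lt_mul_of_pos_left (mul_lt_mul_of_pos_left h3 hKpos) hCpos
        have p3 : 2*C*K*ε' * ω η ≤ 1 * ω η :=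
          mul_le_mul_of_nonneg_right hsmall (hpos η).le
        linarith [hB, p1, p2, p3]
      have hξup : ω ξ < 2 * C * ω ξ₀ := by
        have hB := hSAC ξ ξ₀
        have hε'w : ε' * ω ξ₀ ≤ ω ξ₀ := by
          have := mul_le_mul_of_nonneg_right hε'1 (hpos ξ₀).le
          linarith
        have q1 : C * ω (ξ - ξ₀) < C * (ε' * ω ξ₀) := mul_lt_mul_of_pos_left hcon hCpos
        have q2 : C * (ε' * ω ξ₀) ≤ C * ω ξ₀ := mul_le_mul_of_nonneg_left hε'w hCpos.le
        linarith [hB, q1, q2]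
      have hT := hSAC (η - ξ₀) (ξ - ξ₀)
      rw [sub_sub_sub_cancel_right] at hT
      have hk2 : C*(4*C^2*K+1) * ε' ≤ ε :=
        (key _ hT3.le hle3).trans hmε
      have e1 : ω (η - ξ) < K * (ε' * ω η) :=
        hnn.trans_lt (mul_lt_mul_of_pos_left h3 hKpos)
      have e2 : K * (ε' * ω η) ≤ K * (ε' * (2*C*(2*C*ω ξ₀))) := by
        have h5 : ω η < 2*C*(2*C*ω ξ₀) := by
          have := mul_lt_mul_of_pos_left hξup (by positivity : (0:ℝ) < 2*C)
          linarith
        have h' : ε' * ω η ≤ ε' * (2*C*(2*C*ω ξ₀)) :=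
          mul_le_mul_of_nonneg_left h5.le hε'pos.le
        exact mul_le_mul_of_nonneg_left h' hKpos.le
      have e3 : C * (ω (η - ξ) + ω (ξ - ξ₀)) < C * (K*(ε'*(2*C*(2*C*ω ξ₀))) + ε' * ω ξ₀) := by
        have h6 : ω (η - ξ) + ω (ξ - ξ₀) < K*(ε'*(2*C*(2*C*ω ξ₀))) + ε' * ω ξ₀ := by
          linarith [e1.le.trans e2]
        exact mul_lt_mul_of_pos_left h6 hCpos
      have e4 : C*(4*C^2*K+1)*ε' * ω ξ₀ ≤ ε * ω ξ₀ :=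
        mul_le_mul_of_nonneg_right hk2 (hpos ξ₀).le
      linarith [hT, e3, e4]
  · refine ⟨ω 0 / (2*C*K), 1/(2*C*K), div_pos (hpos 0) (by positivity), by positivity, ?_, ?_⟩
    · rw [div_lt_one (by positivity)]
      nlinarith
    intro X ε hε hεhat ξ hξ
    simp only [brNbhd, Set.mem_iUnion, Set.mem_setOf_eq, exists_prop] at hξ
    obtain ⟨ξ₀, hξ₀X, h1⟩ := hξ
    have hnn : ω (ξ₀ - ξ) ≤ K * ω (ξ - ξ₀) := by
      have := hneg (ξ - ξ₀)
      rwa [neg_sub] at this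
    have h0' := h0 (ξ - ξ₀)
    have hB := hSAC ξ₀ ξ
    have hsmall : C * K * ε ≤ 1/2 := by
      calc C * K * ε ≤ C * K * (1/(2*C*K)) :=
            mul_le_mul_of_nonneg_left hεhat (mul_pos hCpos hKpos).le
        _ = 1/2 := by field_simp
    have hξ₀up : ω ξ₀ < 2 * C * ω ξ := by
      have r1 : C * ω (ξ₀ - ξ) ≤ C * (K * ω (ξ - ξ₀)) :=
        mul_le_mul_of_nonneg_left hnn hCpos.le
      have r2 : C * (K * ω (ξ - ξ₀)) < C * (K * (ε * ω ξ₀)) :=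
        mul_lt_mul_of_pos_left (mul_lt_mul_of_pos_left h1 hKpos) hCpos
      have r3 : C * K * ε * ω ξ₀ ≤ 1/2 * ω ξ₀ :=
        mul_le_mul_of_nonneg_right hsmall (hpos ξ₀).le
      linarith [hB, r1, r2, r3]
    rw [div_lt_iff₀ hε, div_lt_iff₀ (by positivity : (0:ℝ) < 2*C*K)]
    have h2 : ω 0 < K * (ε * ω ξ₀) :=
      lt_of_le_of_lt h0' (mul_lt_mul_of_pos_left h1 hKpos)
    have h3 : K * (ε * ω ξ₀) < K * (ε * (2 * C * ω ξ)) :=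
      mul_lt_mul_of_pos_left (mul_lt_mul_of_pos_left hξ₀up hε) hKpos
    linarith [h2, h3]
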